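/- For any δ > -1, any t_n > 0, and any n ≥ 2, ∫_{0 < t_1 < ⋯ < t_{n-1} < t_n} ∏_{j=1}^{n-1} (t_{j+1} - t_j)^δ dt_1 ⋯ dt_{n-1} = Γ(1+δ)^{n-1} / Γ((n-1)(1+δ) + 1) · t_n^{(n-1)(1+δ)}. -/

import Mathlib

open MeasureTheory Real Set

lemma cplx_eq (p q x : ℝ) (hx0 : 0 ≤ x) (hx1 : x ≤ 1) :
    (x:ℂ) ^ ((p:ℂ) - 1) * (1 - (x:ℂ)) ^ ((q:ℂ) - 1)
      = ((x ^ (p-1) * (1-x) ^ (q-1) : ℝ) : ℂ) := by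
  rw [show ((p:ℂ)-1) = ((p-1 : ℝ) : ℂ) by push_cast; ring,
      show ((q:ℂ)-1) = ((q-1 : ℝ) : ℂ) by push_cast; ring,
      show (1 - (x:ℂ)) = ((1-x : ℝ) : ℂ) by push_cast; ring,
      ← Complex.ofReal_cpow hx0, ← Complex.ofReal_cpow (by linarith), ← Complex.ofReal_mul]

lemma realBeta (p q : ℝ) (hp : 0 < p) (hq : 0 < q) :
    ∫ x in (0:ℝ)..1, x ^ (p-1) * (1-x) ^ (q-1) = Gamma p * Gamma q / Gamma (p+q) := by
  have h := Complex.Gamma_mul_Gamma_eq_betaIntegral (s := (p:ℂ)) (t := (q:ℂ))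
    (by simpa using hp) (by simpa using hq)
  have hB : Complex.betaIntegral p q = ((∫ x in (0:ℝ)..1, x ^ (p-1) * (1-x) ^ (q-1) : ℝ) : ℂ) := by
    rw [Complex.betaIntegral, ← intervalIntegral.integral_ofReal]
    refine intervalIntegral.integral_congr fun x hx => ?_
    rw [uIcc_of_le zero_le_one] at hx
    exact cplx_eq p q x hx.1 hx.2
  have hne : Gamma (p+q) ≠ 0 := (Gamma_pos_of_pos (by linarith)).ne'
  rw [hB] at h
  have : ((Gamma p * Gamma q : ℝ) : ℂ) = ((Gamma (p+q) * ∫ x in (0:ℝ)..1, x ^ (p-1) * (1-x) ^ (q-1) : ℝ) : ℂ) := by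
    push_cast [← Complex.Gamma_ofReal]
    simpa using h
  have h2 := Complex.ofReal_injective this
  field_simp
  linarith [h2]

lemma realBeta_integrable (p q : ℝ) (hp : 0 < p) (hq : 0 < q) :
    IntervalIntegrable (fun x : ℝ => x ^ (p-1) * (1-x) ^ (q-1)) volume 0 1 := by
  have h := Complex.betaIntegral_convergent (u := (p:ℂ)) (v := (q:ℂ))
    (by simpa using hp) (by simpa using hq)
  rw [intervalIntegrable_iff] at h ⊢
  rw [uIoc_of_le zero_le_one] at h ⊢
  have hre := (h.re)
  refine IntegrableOn.congr_fun hre (fun x hx => ?_) measurableSet_Ioc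
  show RCLike.re _ = _
  rw [cplx_eq p q x hx.1.le hx.2]
  simp

lemma scaledBeta_integrable (p q T : ℝ) (hp : 0 < p) (hq : 0 < q) (hT : 0 < T) :
    IntegrableOn (fun s : ℝ => s ^ (p-1) * (T-s) ^ (q-1)) (Ioc 0 T) := by
  have h := ((realBeta_integrable p q hp hq).comp_mul_left (c := T⁻¹)).const_mul (T ^ (p+q-2))
  have h0 : (0:ℝ) / T⁻¹ = 0 := by simp
  have h1 : (1:ℝ) / T⁻¹ = T := by field_simp
  rw [h0, h1, intervalIntegrable_iff, uIoc_of_le hT.le] at h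
  refine h.congr_fun (fun s hs => ?_) measurableSet_Ioc
  have hs0 : 0 < s := hs.1
  have hsT : s ≤ T := hs.2
  have h1s : 0 ≤ 1 - T⁻¹ * s := by
    rw [sub_nonneg]; rw [inv_mul_le_iff₀ hT]; simpa using hsT
  have e1 : (T⁻¹ * s) ^ (p-1) = T⁻¹ ^ (p-1) * s ^ (p-1) :=
    mul_rpow (by positivity) hs0.le
  have e2 : (1 - T⁻¹ * s) = T⁻¹ * (T - s) := by field_simp
  have e3 : (T⁻¹ * (T-s)) ^ (q-1) = T⁻¹ ^ (q-1) * (T-s) ^ (q-1) :=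
    mul_rpow (by positivity) (by linarith)
  simp only [e2, e1, e3]
  rw [show T ^ (p+q-2) * (T⁻¹ ^ (p-1) * s ^ (p-1) * (T⁻¹ ^ (q-1) * (T-s) ^ (q-1)))
      = (T ^ (p+q-2) * T⁻¹ ^ (p-1) * T⁻¹ ^ (q-1)) * (s ^ (p-1) * (T-s) ^ (q-1)) by ring]
  rw [← Real.rpow_neg_one T, ← Real.rpow_mul hT.le, ← Real.rpow_mul hT.le,
      ← Real.rpow_add hT, ← Real.rpow_add hT,
      show p+q-2 + -1*(p-1) + -1*(q-1) = 0 by ring, rpow_zero, one_mul]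

lemma scaledBeta (p q T : ℝ) (hp : 0 < p) (hq : 0 < q) (hT : 0 < T) :
    ∫ s in (0:ℝ)..T, s ^ (p-1) * (T-s) ^ (q-1)
      = Gamma p * Gamma q / Gamma (p+q) * T ^ (p+q-1) := by
  have key : ∫ x in (0:ℝ)..1, (T*x) ^ (p-1) * (T - T*x) ^ (q-1)
      = T⁻¹ • ∫ s in (0:ℝ)..T, s ^ (p-1) * (T-s) ^ (q-1) := by
    have := intervalIntegral.integral_comp_mul_left
      (a := (0:ℝ)) (b := 1) (fun s => s ^ (p-1) * (T-s) ^ (q-1)) hT.ne'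
    simpa using this
  have congr1 : ∫ x in (0:ℝ)..1, (T*x) ^ (p-1) * (T - T*x) ^ (q-1)
      = T ^ (p+q-2) * ∫ x in (0:ℝ)..1, x ^ (p-1) * (1-x) ^ (q-1) := by
    rw [← intervalIntegral.integral_const_mul]
    refine intervalIntegral.integral_congr fun x hx => ?_
    rw [uIcc_of_le zero_le_one] at hx
    have e1 : (T*x) ^ (p-1) = T ^ (p-1) * x ^ (p-1) := mul_rpow hT.le hx.1
    have e2 : T - T*x = T * (1-x) := by ring
    have e3 : (T * (1-x)) ^ (q-1) = T ^ (q-1) * (1-x) ^ (q-1) :=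
      mul_rpow hT.le (by linarith [hx.2])
    rw [e1, e2, e3, show T ^ (p-1) * x ^ (p-1) * (T ^ (q-1) * (1-x) ^ (q-1))
        = (T ^ (p-1) * T ^ (q-1)) * (x ^ (p-1) * (1-x) ^ (q-1)) by ring,
      ← Real.rpow_add hT]
    ring_nf
  have hT' : T ≠ 0 := hT.ne'
  calc ∫ s in (0:ℝ)..T, s ^ (p-1) * (T-s) ^ (q-1)
      = T * (T⁻¹ • ∫ s in (0:ℝ)..T, s ^ (p-1) * (T-s) ^ (q-1)) := by
        rw [smul_eq_mul]; field_simp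
    _ = T * (T ^ (p+q-2) * (Gamma p * Gamma q / Gamma (p+q))) := by
        rw [← key, congr1, realBeta p q hp hq]
    _ = Gamma p * Gamma q / Gamma (p+q) * (T ^ (1:ℝ) * T ^ (p+q-2)) := by
        rw [Real.rpow_one]; ring
    _ = Gamma p * Gamma q / Gamma (p+q) * T ^ (p+q-1) := by
        rw [← Real.rpow_add hT, show (1:ℝ)+(p+q-2) = p+q-1 by ring]


lemma lintBeta (p q T : ℝ) (hp : 0 < p) (hq : 0 < q) (hT : 0 < T) :
    ∫⁻ s in Ioo (0:ℝ) T, ENNReal.ofReal (s ^ (p-1) * (T-s) ^ (q-1))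
      = ENNReal.ofReal (Gamma p * Gamma q / Gamma (p+q) * T ^ (p+q-1)) := by
  rw [setLIntegral_congr (Ioo_ae_eq_Ioc (μ := volume) (a := (0:ℝ)) (b := T))]
  have nn : 0 ≤ᵐ[volume.restrict (Ioc (0:ℝ) T)] fun s => s ^ (p-1) * (T-s) ^ (q-1) := by
    filter_upwards [ae_restrict_mem measurableSet_Ioc] with s hs
    exact mul_nonneg (rpow_nonneg hs.1.le _) (rpow_nonneg (by linarith [hs.2]) _)
  rw [← ofReal_integral_eq_lintegral_ofReal (scaledBeta_integrable p q T hp hq hT) nn,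
    ← intervalIntegral.integral_of_le hT.le, scaledBeta p q T hp hq hT]
def OS (m : ℕ) (T : ℝ) : Set (Fin m → ℝ) :=
  {t | (∀ i, 0 < t i) ∧ (∀ i, t i < T) ∧ StrictMono t}

noncomputable def FF (δ : ℝ) (m : ℕ) (T : ℝ) (t : Fin m → ℝ) : ENNReal :=
  ∏ j : Fin m, ENNReal.ofReal (((if hj : (j:ℕ)+1 < m then t ⟨(j:ℕ)+1, hj⟩ else T) - t j) ^ δ)

lemma measurableSet_OS (m : ℕ) (T : ℝ) : MeasurableSet (OS m T) := by
  have : OS m T = (⋂ i, {t : Fin m → ℝ | 0 < t i}) ∩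
      ((⋂ i, {t : Fin m → ℝ | t i < T}) ∩
        (⋂ (a : Fin m), ⋂ (b : Fin m), ⋂ (_ : a < b), {t : Fin m → ℝ | t a < t b})) := by
    ext t
    simp only [OS, mem_setOf_eq, mem_inter_iff, mem_iInter]
    rfl
  rw [this]
  refine (MeasurableSet.iInter fun i => measurableSet_lt measurable_const (measurable_pi_apply i)).inter
    ((MeasurableSet.iInter fun i => measurableSet_lt (measurable_pi_apply i) measurable_const).inter
      (MeasurableSet.iInter fun a => MeasurableSet.iInter fun b => MeasurableSet.iInter fun _ =>
        measurableSet_lt (measurable_pi_apply a) (measurable_pi_apply b)))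

lemma measurable_FF (δ : ℝ) (m : ℕ) (T : ℝ) : Measurable (FF δ m T) := by
  refine Finset.measurable_prod _ fun j _ => ?_
  by_cases h : (j:ℕ)+1 < m
  · simp only [dif_pos h]
    fun_prop
  · simp only [dif_neg h]
    fun_prop

lemma snoc_mem_OS {m : ℕ} {T s : ℝ} {u : Fin m → ℝ} :
    (Fin.snoc u s : Fin (m+1) → ℝ) ∈ OS (m+1) T ↔ s ∈ Ioo (0:ℝ) T ∧ u ∈ OS m s := by
  constructor
  · rintro ⟨h1, h2, h3⟩
    have hs0 : 0 < s := by simpa using h1 (Fin.last m)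
    have hsT : s < T := by simpa using h2 (Fin.last m)
    refine ⟨⟨hs0, hsT⟩, fun j => by simpa using h1 (Fin.castSucc j), fun j => ?_, fun a b hab => ?_⟩
    · have := h3 (Fin.castSucc_lt_last j)
      simpa using this
    · have := h3 (show Fin.castSucc a < Fin.castSucc b from Fin.castSucc_lt_castSucc_iff.2 hab)
      simpa using this
  · rintro ⟨⟨hs0, hsT⟩, hu1, hu2, hu3⟩
    have hmono : StrictMono (Fin.snoc u s : Fin (m+1) → ℝ) := by
      rw [Fin.strictMono_iff_lt_succ]
      rintro ⟨i, hi⟩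
      by_cases h : i + 1 < m
      · have e : (Fin.succ ⟨i, hi⟩ : Fin (m+1)) = Fin.castSucc ⟨i+1, h⟩ := rfl
        rw [e, Fin.snoc_castSucc, Fin.snoc_castSucc]
        exact hu3 (show (⟨i, hi⟩ : Fin m) < ⟨i+1, h⟩ from by simp)
      · have e : (Fin.succ ⟨i, hi⟩ : Fin (m+1)) = Fin.last m := by
          apply Fin.ext; simp; omega
        rw [e, Fin.snoc_castSucc, Fin.snoc_last]
        exact hu2 _
    refine ⟨fun i => ?_, fun i => ?_, hmono⟩
    · induction i using Fin.lastCases with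
      | last => simpa using hs0
      | cast j => simpa using hu1 j
    · induction i using Fin.lastCases with
      | last => simpa using hsT
      | cast j =>
        have := hu2 j
        simp only [Fin.snoc_castSucc]
        linarith

lemma FF_snoc {δ : ℝ} {m : ℕ} {T s : ℝ} {u : Fin m → ℝ} :
    FF δ (m+1) T (Fin.snoc u s) = ENNReal.ofReal ((T-s)^δ) * FF δ m s u := by
  rw [FF, FF, Fin.prod_univ_castSucc, mul_comm]
  congr 1
  · rw [dif_neg (by simp), Fin.snoc_last]
  · apply Finset.prod_congr rfl
    intro j _
    congr 1
    have hc : ((Fin.castSucc j : ℕ))+1 < m+1 := by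
      simpa using j.isLt
    rw [dif_pos hc]
    by_cases h : (j:ℕ)+1 < m
    · rw [dif_pos h]
      have e1 : (⟨((Fin.castSucc j : ℕ))+1, hc⟩ : Fin (m+1)) = Fin.castSucc ⟨(j:ℕ)+1, h⟩ := rfl
      rw [e1, Fin.snoc_castSucc, Fin.snoc_castSucc]
    · rw [dif_neg h]
      have e1 : (⟨((Fin.castSucc j : ℕ))+1, hc⟩ : Fin (m+1)) = Fin.last m := by
        apply Fin.ext
        simp only [Fin.val_last, Fin.coe_castSucc]
        omega
      rw [e1, Fin.snoc_last, Fin.snoc_castSucc]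

lemma lintBeta' (a b T : ℝ) (ha : -1 < a) (hb : -1 < b) (hT : 0 < T) :
    ∫⁻ s in Ioo (0:ℝ) T, ENNReal.ofReal (s ^ a * (T-s) ^ b)
      = ENNReal.ofReal (Gamma (a+1) * Gamma (b+1) / Gamma (a+b+2) * T ^ (a+b+1)) := by
  have h := lintBeta (a+1) (b+1) T (by linarith) (by linarith) hT
  rw [show a+1-1 = a by ring, show b+1-1 = b by ring, show a+1+(b+1) = a+b+2 by ring,
    show a+b+2-1 = a+b+1 by ring] at h
  exact h

lemma key (δ : ℝ) (hδ : -1 < δ) : ∀ (m : ℕ), ∀ T : ℝ, 0 < T →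
    (∫⁻ t in OS m T, FF δ m T t)
      = ENNReal.ofReal (Gamma (1+δ) ^ m / Gamma (m*(1+δ)+1) * T ^ ((m:ℝ)*(1+δ))) := by
  have h1δ : (0:ℝ) < 1 + δ := by linarith
  intro m
  induction m with
  | zero =>
    intro T hT
    have hOS : OS 0 T = Set.univ := by
      ext t
      simp only [OS, mem_setOf_eq, mem_univ, iff_true]
      exact ⟨fun i => i.elim0, fun i => i.elim0, Subsingleton.strictMono t⟩
    have hFF : FF δ 0 T = fun _ => 1 := by
      funext t; simp [FF]
    rw [hOS, Measure.restrict_univ, hFF, lintegral_one]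
    have huniv : (volume : Measure (Fin 0 → ℝ)) Set.univ = 1 := by
      simp [MeasureTheory.volume_pi, Measure.pi_univ]
    rw [huniv]
    norm_num [Real.Gamma_one]
  | succ m ih =>
    intro T hT
    have hm0 : (0:ℝ) ≤ (m:ℝ)*(1+δ) := mul_nonneg (Nat.cast_nonneg m) h1δ.le
    set e := MeasurableEquiv.piFinSuccAbove (fun _ : Fin (m+1) => ℝ) (Fin.last m) with he
    have hS := measurableSet_OS (m+1) T
    have hF := measurable_FF δ (m+1) T
    have hmp := volume_preserving_piFinSuccAbove (fun _ : Fin (m+1) => ℝ) (Fin.last m)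
    have hGmeas : Measurable fun p : ℝ × (Fin m → ℝ) =>
        ((OS (m+1) T).indicator (FF δ (m+1) T)) (e.symm p) :=
      (hF.indicator hS).comp e.symm.measurable
    rw [← lintegral_indicator hS _, ← (hmp.symm e).map_eq, lintegral_map_equiv,
      Measure.volume_eq_prod, lintegral_prod _ hGmeas.aemeasurable]
    have hes : ∀ (s : ℝ) (u : Fin m → ℝ), e.symm (s, u) = Fin.snoc u s := by
      intro s u
      rw [he]
      rw [MeasurableEquiv.piFinSuccAbove_symm_apply]
      exact Fin.insertNth_last' s u
    have inner : ∀ s : ℝ, (∫⁻ u, ((OS (m+1) T).indicator (FF δ (m+1) T)) (e.symm (s, u)) ∂volume)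
        = (Ioo (0:ℝ) T).indicator (fun s => ENNReal.ofReal ((T-s)^δ)
            * ENNReal.ofReal (Gamma (1+δ) ^ m / Gamma (m*(1+δ)+1) * s ^ ((m:ℝ)*(1+δ)))) s := by
      intro s
      by_cases hs : s ∈ Ioo (0:ℝ) T
      · rw [Set.indicator_of_mem hs]
        have hptw : ∀ u : Fin m → ℝ, ((OS (m+1) T).indicator (FF δ (m+1) T)) (e.symm (s, u))
            = ENNReal.ofReal ((T-s)^δ) * (OS m s).indicator (FF δ m s) u := by
          intro u
          rw [hes s u]
          by_cases hu : u ∈ OS m s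
          · rw [Set.indicator_of_mem (snoc_mem_OS.2 ⟨hs, hu⟩), Set.indicator_of_mem hu, FF_snoc]
          · rw [Set.indicator_of_notMem, Set.indicator_of_notMem hu, mul_zero]
            intro hmem
            exact hu (snoc_mem_OS.1 hmem).2
        simp_rw [hptw]
        rw [lintegral_const_mul _ ((measurable_FF δ m s).indicator (measurableSet_OS m s)),
          lintegral_indicator (measurableSet_OS m s) _, ih s hs.1]
      · rw [Set.indicator_of_notMem hs]
        have hptw : ∀ u : Fin m → ℝ, ((OS (m+1) T).indicator (FF δ (m+1) T)) (e.symm (s, u)) = 0 := by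
          intro u
          rw [hes s u, Set.indicator_of_notMem]
          intro hmem
          exact hs (snoc_mem_OS.1 hmem).1
        simp_rw [hptw]
        exact lintegral_zero
    simp_rw [inner]
    rw [lintegral_indicator measurableSet_Ioo _]
    have hC : 0 ≤ Gamma (1+δ) ^ m / Gamma ((m:ℝ)*(1+δ)+1) :=
      div_nonneg (pow_nonneg (Gamma_pos_of_pos h1δ).le _)
        (Gamma_pos_of_pos (by linarith)).le
    have hcongr : ∫⁻ s in Ioo (0:ℝ) T, ENNReal.ofReal ((T-s)^δ)
            * ENNReal.ofReal (Gamma (1+δ) ^ m / Gamma (m*(1+δ)+1) * s ^ ((m:ℝ)*(1+δ)))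
        = ∫⁻ s in Ioo (0:ℝ) T, ENNReal.ofReal (Gamma (1+δ) ^ m / Gamma (m*(1+δ)+1))
            * ENNReal.ofReal (s ^ ((m:ℝ)*(1+δ)) * (T-s) ^ δ) := by
      refine setLIntegral_congr_fun measurableSet_Ioo (fun s hs => ?_)
      rw [ENNReal.ofReal_mul hC, ENNReal.ofReal_mul (rpow_nonneg hs.1.le _)]
      ring
    rw [hcongr, lintegral_const_mul' _ _ ENNReal.ofReal_ne_top,
      lintBeta' ((m:ℝ)*(1+δ)) δ T (by linarith) hδ hT,
      ← ENNReal.ofReal_mul hC]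
    congr 1
    have hGne : Gamma ((m:ℝ)*(1+δ)+1) ≠ 0 := (Gamma_pos_of_pos (by linarith)).ne'
    rw [show ((m:ℝ)*(1+δ)+1) = (m:ℝ)*(1+δ)+1 from rfl,
      show ((m:ℝ)*(1+δ)+δ+2) = ((m:ℝ)+1)*(1+δ)+1 by ring,
      show ((m:ℝ)*(1+δ)+δ+1) = ((m:ℝ)+1)*(1+δ) by ring]
    push_cast
    field_simp
    ring

theorem ordered_simplex_integral (n : ℕ) (hn : 2 ≤ n) (δ : ℝ) (hδ : -1 < δ)
    (tn : ℝ) (htn : 0 < tn) :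
    (∫ t in {t : Fin (n - 1) → ℝ | (∀ i, 0 < t i) ∧ (∀ i, t i < tn) ∧ StrictMono t},
        ∏ j : Fin (n - 1),
          ((if hj : (j : ℕ) + 1 < n - 1 then t ⟨(j : ℕ) + 1, hj⟩ else tn) - t j) ^ δ)
      = Real.Gamma (1 + δ) ^ (n - 1) / Real.Gamma ((n - 1) * (1 + δ) + 1)
          * tn ^ (((n : ℝ) - 1) * (1 + δ)) := by
  have hSet : {t : Fin (n - 1) → ℝ | (∀ i, 0 < t i) ∧ (∀ i, t i < tn) ∧ StrictMono t}
      = OS (n-1) tn := rfl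
  have hS := measurableSet_OS (n-1) tn
  have hgap : ∀ t ∈ OS (n-1) tn, ∀ j : Fin (n-1),
      0 ≤ ((if hj : (j : ℕ) + 1 < n - 1 then t ⟨(j : ℕ) + 1, hj⟩ else tn) - t j) := by
    rintro t ⟨h1, h2, h3⟩ j
    by_cases h : (j:ℕ)+1 < n-1
    · rw [dif_pos h]
      have hlt : j < (⟨(j:ℕ)+1, h⟩ : Fin (n-1)) := by simp [Fin.lt_def]
      have := h3 hlt
      linarith
    · rw [dif_neg h]
      have := h2 j
      linarith
  have hf : Measurable fun t : Fin (n-1) → ℝ =>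
      ∏ j : Fin (n - 1), ((if hj : (j : ℕ) + 1 < n - 1 then t ⟨(j : ℕ) + 1, hj⟩ else tn) - t j) ^ δ := by
    refine Finset.measurable_prod _ fun j _ => ?_
    by_cases h : (j:ℕ)+1 < n-1
    · simp only [dif_pos h]
      fun_prop
    · simp only [dif_neg h]
      fun_prop
  have hnn : 0 ≤ᵐ[volume.restrict (OS (n-1) tn)] fun t : Fin (n-1) → ℝ =>
      ∏ j : Fin (n - 1), ((if hj : (j : ℕ) + 1 < n - 1 then t ⟨(j : ℕ) + 1, hj⟩ else tn) - t j) ^ δ := by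
    filter_upwards [ae_restrict_mem hS] with t ht
    exact Finset.prod_nonneg fun j _ => rpow_nonneg (hgap t ht j) δ
  rw [hSet, integral_eq_lintegral_of_nonneg_ae hnn hf.aestronglyMeasurable]
  have hcongr : ∫⁻ t in OS (n-1) tn, ENNReal.ofReal
        (∏ j : Fin (n - 1), ((if hj : (j : ℕ) + 1 < n - 1 then t ⟨(j : ℕ) + 1, hj⟩ else tn) - t j) ^ δ)
      = ∫⁻ t in OS (n-1) tn, FF δ (n-1) tn t := by
    refine setLIntegral_congr_fun hS (fun t ht => ?_)
    rw [FF, ENNReal.ofReal_prod_of_nonneg fun j _ => rpow_nonneg (hgap t ht j) δ]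
  rw [hcongr, key δ hδ (n-1) tn htn, ENNReal.toReal_ofReal]
  · rw [Nat.cast_sub (by omega : 1 ≤ n), Nat.cast_one]
  · have h1δ : (0:ℝ) < 1 + δ := by linarith
    have hm0 : (0:ℝ) ≤ ((n-1 : ℕ):ℝ)*(1+δ) := mul_nonneg (Nat.cast_nonneg _) h1δ.le
    exact mul_nonneg (div_nonneg (pow_nonneg (Gamma_pos_of_pos h1δ).le _)
      (Gamma_pos_of_pos (by linarith)).le) (rpow_nonneg htn.le _)
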